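/- The fixed point of the optimized-lookahead operator is the optimal self-triggered cost over stationary policies: if V_st is the unique fixed point of T_O, then for every x ∈ X, V_st(x) equals the infimum over all stationary self-triggering policies μ = (π, τ) of f^μ(x), where f^μ is the unique fixed point of T_μ; moreover this infimum is attained by some stationary self-triggering policy. -/

import Mathlib

open scoped BigOperators

/-- Expectation of `f` under a probability mass function `p` on a finite type. -/
noncomputable def expect {X : Type*} [Fintype X] (p : PMF X) (f : X → ℝ) : ℝ :=
  ∑ y, (p y).toReal * f y

/-- The classic Bellman operator `(T v)(x) = min_a ( c(x,a) + β · E_{y∼P(x,a)}[v(y)] )`. -/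
noncomputable def bellman {X A : Type*} [Fintype X] [Fintype A]
    (P : X → A → PMF X) (c : X × A → ℝ) (β : ℝ) (v : X → ℝ) : X → ℝ :=
  fun x => ⨅ a : A, (c (x, a) + β * expect (P x a) v)

/-- The skip kernel: distribution of the state after `t` steps from `x`, holding action `a`. -/
noncomputable def skip {X A : Type*} (P : X → A → PMF X) (x : X) (a : A) : ℕ → PMF X
  | 0 => PMF.pure x
  | t + 1 => (skip P x a t).bind fun y => P y a

/-- The consolidated cost `c̄(x,a,Δt) = ∑_{t=0}^{Δt−1} β^t · E_{y∼P̄(x,a,t)}[c(y,a)]`. -/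
noncomputable def cbar {X A : Type*} [Fintype X]
    (P : X → A → PMF X) (c : X × A → ℝ) (β : ℝ) (x : X) (a : A) (Δt : ℕ) : ℝ :=
  ∑ t ∈ Finset.range Δt, β ^ t * expect (skip P x a t) (fun y => c (y, a))

/-- The optimized-lookahead Bellman operator
`(T_O v)(x) = min_{a, 1 ≤ Δt ≤ T̄} ( c̄(x,a,Δt) + β^Δt ( O + E_{y∼P̄(x,a,Δt)}[v(y)] ) )`. -/
noncomputable def TO {X A : Type*} [Fintype X] [Fintype A]
    (P : X → A → PMF X) (c : X × A → ℝ) (β O : ℝ) (Tb : ℕ) (v : X → ℝ) : X → ℝ :=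
  fun x => ⨅ a : A, ⨅ Δt : {n : ℕ // n ∈ Finset.Icc 1 Tb},
    (cbar P c β x a Δt.val + β ^ Δt.val * (O + expect (skip P x a Δt.val) v))

/-- The evaluation operator of a stationary self-triggering policy `μ = (π, τ)`. -/
noncomputable def Tpol {X A : Type*} [Fintype X]
    (P : X → A → PMF X) (c : X × A → ℝ) (β O : ℝ)
    (π : X → A) (τ : X → ℕ) (v : X → ℝ) : X → ℝ :=
  fun x => cbar P c β x (π x) (τ x) + β ^ (τ x) * (O + expect (skip P x (π x) (τ x)) v)


lemma pmf_sum_toReal {X : Type*} [Fintype X] (p : PMF X) :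
    ∑ y, (p y).toReal = 1 := by
  have h := p.tsum_coe
  rw [tsum_fintype] at h
  rw [← ENNReal.toReal_sum (fun a _ => p.apply_ne_top a), h, ENNReal.toReal_one]

lemma expect_mono {X : Type*} [Fintype X] (p : PMF X) {u v : X → ℝ}
    (h : ∀ y, u y ≤ v y) : expect p u ≤ expect p v :=
  Finset.sum_le_sum fun y _ => mul_le_mul_of_nonneg_left (h y) ENNReal.toReal_nonneg

lemma expect_add_const {X : Type*} [Fintype X] (p : PMF X) (f : X → ℝ) (M : ℝ) :
    expect p (fun y => f y + M) = expect p f + M := by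
  unfold expect
  have h : ∑ y, (p y).toReal * (f y + M) = ∑ y, ((p y).toReal * f y + (p y).toReal * M) := by
    simp [mul_add]
  rw [h, Finset.sum_add_distrib, ← Finset.sum_mul, pmf_sum_toReal, one_mul]

/-- If `u ≤ Tpol u` pointwise and `f` is a fixed point of `Tpol`, then `u ≤ f`. -/
lemma le_fixed_of_le_Tpol {X A : Type*} [Fintype X] [Nonempty X]
    (P : X → A → PMF X) (c : X × A → ℝ) {β : ℝ} (O : ℝ)
    (hβ0 : 0 ≤ β) (hβ1 : β < 1)
    (π : X → A) (τ : X → ℕ) (hτ : ∀ y, 1 ≤ τ y)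
    (u f : X → ℝ) (hu : ∀ x, u x ≤ Tpol P c β O π τ u x)
    (hf : Tpol P c β O π τ f = f) : ∀ x, u x ≤ f x := by
  obtain ⟨x0, hx0⟩ := Finite.exists_max (fun x => u x - f x)
  set M := u x0 - f x0 with hM
  have hβpow : ∀ x : X, (0:ℝ) ≤ β ^ (τ x) := fun x => pow_nonneg hβ0 _
  have hle : ∀ x, u x ≤ f x + M := fun x => by
    have := hx0 x; linarith
  have hE : expect (skip P x0 (π x0) (τ x0)) u
      ≤ expect (skip P x0 (π x0) (τ x0)) f + M := by
    calc expect (skip P x0 (π x0) (τ x0)) u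
        ≤ expect (skip P x0 (π x0) (τ x0)) (fun y => f y + M) :=
          expect_mono _ (fun y => hle y)
      _ = expect (skip P x0 (π x0) (τ x0)) f + M := expect_add_const _ _ _
  have hfx0 : Tpol P c β O π τ f x0 = f x0 := congrFun hf x0
  have h1 : u x0 ≤ f x0 + β ^ (τ x0) * M := by
    have h2 := hu x0
    unfold Tpol at h2 hfx0
    nlinarith [hβpow x0]
  have hMble : M ≤ β ^ (τ x0) * M := by linarith
  have hMnonpos : M ≤ 0 := by
    by_contra h
    push_neg at h
    have hpow : β ^ (τ x0) < 1 := by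
      calc β ^ (τ x0) ≤ β ^ 1 := pow_le_pow_of_le_one hβ0 hβ1.le (hτ x0)
        _ = β := pow_one β
        _ < 1 := hβ1
    nlinarith
  intro x
  have := hx0 x; linarith

theorem Vst_eq_optimal_self_triggered_cost {X A : Type*} [Fintype X] [Nonempty X] [Fintype A] [Nonempty A]
    (P : X → A → PMF X) (c : X × A → ℝ) (hc : ∀ (x : X) (a : A), 0 ≤ c (x, a))
    (β : ℝ) (hβ0 : 0 ≤ β) (hβ1 : β < 1)
    (O : ℝ) (hO : 0 ≤ O) (Tb : ℕ) (hTb : 1 ≤ Tb)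
    (Vst : X → ℝ) (hVst : TO P c β O Tb Vst = Vst) :
    (∀ x : X, Vst x = sInf {r : ℝ | ∃ (π : X → A) (τ : X → ℕ),
      (∀ y : X, 1 ≤ τ y ∧ τ y ≤ Tb) ∧
      ∃ f : X → ℝ, Tpol P c β O π τ f = f ∧ r = f x}) ∧
    ∃ (π : X → A) (τ : X → ℕ), (∀ y : X, 1 ≤ τ y ∧ τ y ≤ Tb) ∧
      ∃ f : X → ℝ, Tpol P c β O π τ f = f ∧ ∀ x : X, f x = Vst x := by
  classical
  haveI hNE : Nonempty {n : ℕ // n ∈ Finset.Icc 1 Tb} :=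
    ⟨⟨1, Finset.mem_Icc.mpr ⟨le_refl 1, hTb⟩⟩⟩
  -- greedy policy
  have key : ∀ x : X, ∃ (a : A) (t : ℕ), 1 ≤ t ∧ t ≤ Tb ∧
      Vst x = cbar P c β x a t + β ^ t * (O + expect (skip P x a t) Vst) := by
    intro x
    have hx : Vst x = TO P c β O Tb Vst x := (congrFun hVst x).symm
    rw [TO] at hx
    obtain ⟨a, ha⟩ := exists_eq_ciInf_of_finite
      (f := fun a : A => ⨅ Δt : {n : ℕ // n ∈ Finset.Icc 1 Tb},
        (cbar P c β x a Δt.val + β ^ Δt.val * (O + expect (skip P x a Δt.val) Vst)))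
    obtain ⟨Δt, hΔ⟩ := exists_eq_ciInf_of_finite
      (f := fun Δt : {n : ℕ // n ∈ Finset.Icc 1 Tb} =>
        cbar P c β x a Δt.val + β ^ Δt.val * (O + expect (skip P x a Δt.val) Vst))
    have hm := Finset.mem_Icc.mp Δt.2
    exact ⟨a, Δt.val, hm.1, hm.2, by rw [hx, ← ha, ← hΔ]⟩
  choose πg τg hτ1 hτ2 hfix using key
  have hTpolg : Tpol P c β O πg τg Vst = Vst := by
    funext x
    exact (hfix x).symm
  -- lower bound : Vst ≤ any fixed point
  have hlow : ∀ (π : X → A) (τ : X → ℕ), (∀ y, 1 ≤ τ y ∧ τ y ≤ Tb) →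
      ∀ f : X → ℝ, Tpol P c β O π τ f = f → ∀ x, Vst x ≤ f x := by
    intro π τ hτ f hf
    apply le_fixed_of_le_Tpol P c O hβ0 hβ1 π τ (fun y => (hτ y).1) Vst f _ hf
    intro x
    have hx : Vst x = TO P c β O Tb Vst x := (congrFun hVst x).symm
    rw [hx, TO, Tpol]
    have hmem : τ x ∈ Finset.Icc 1 Tb := Finset.mem_Icc.mpr (hτ x)
    calc (⨅ a : A, ⨅ Δt : {n : ℕ // n ∈ Finset.Icc 1 Tb},
          (cbar P c β x a Δt.val + β ^ Δt.val * (O + expect (skip P x a Δt.val) Vst)))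
        ≤ ⨅ Δt : {n : ℕ // n ∈ Finset.Icc 1 Tb},
          (cbar P c β x (π x) Δt.val + β ^ Δt.val * (O + expect (skip P x (π x) Δt.val) Vst)) :=
          ciInf_le (Finite.bddBelow_range _) (π x)
      _ ≤ cbar P c β x (π x) (τ x) + β ^ (τ x) * (O + expect (skip P x (π x) (τ x)) Vst) :=
          ciInf_le (Finite.bddBelow_range _) (⟨τ x, hmem⟩ : {n : ℕ // n ∈ Finset.Icc 1 Tb})
  constructor
  · intro x
    have hmem : Vst x ∈ {r : ℝ | ∃ (π : X → A) (τ : X → ℕ),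
        (∀ y : X, 1 ≤ τ y ∧ τ y ≤ Tb) ∧
        ∃ f : X → ℝ, Tpol P c β O π τ f = f ∧ r = f x} :=
      ⟨πg, τg, fun y => ⟨hτ1 y, hτ2 y⟩, Vst, hTpolg, rfl⟩
    have hlb : ∀ r ∈ {r : ℝ | ∃ (π : X → A) (τ : X → ℕ),
        (∀ y : X, 1 ≤ τ y ∧ τ y ≤ Tb) ∧
        ∃ f : X → ℝ, Tpol P c β O π τ f = f ∧ r = f x}, Vst x ≤ r := by
      rintro r ⟨π, τ, hτ, f, hf, rfl⟩
      exact hlow π τ hτ f hf x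
    exact le_antisymm (le_csInf ⟨Vst x, hmem⟩ hlb) (csInf_le ⟨Vst x, hlb⟩ hmem)
  · exact ⟨πg, τg, fun y => ⟨hτ1 y, hτ2 y⟩, Vst, hTpolg, fun x => rfl⟩
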